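/- (Case n = 1 of the paper's Theorem on torsion classes in (n+2)-angulated categories.) Let C be a pretriangulated category and let X be a class of objects of C closed under isomorphisms, finite direct sums and direct summands, such that every object of C admits an X-cover, and such that X is left closed under extensions. Then X is a torsion class: for every object c of C there exists a distinguished triangle x → c → y → Σx with x ∈ X and Hom_C(x̃, y) = 0 for every x̃ ∈ X. -/

import Mathlib

open CategoryTheory Limits Pretriangulated

/-- Case `n = 1` of the theorem on torsion classes in `(n+2)`-angulated categories:
if `X` is closed under isomorphisms, finite direct sums and direct summands,
every object admits an `X`-cover, and `X` is left closed under extensions,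
then `X` is a torsion class: every object `c` sits in a distinguished triangle
`x ⟶ c ⟶ y ⟶ Σ x` with `x ∈ X` and `Hom(x̃, y) = 0` for all `x̃ ∈ X`. -/
theorem torsion_class_of_covering_left_closed
    {C : Type*} [Category C] [HasZeroObject C] [Preadditive C] [HasShift C ℤ]
    [∀ n : ℤ, (shiftFunctor C n).Additive] [Pretriangulated C]
    [HasBinaryBiproducts C]
    (X : Set C)
    -- `X` is closed under isomorphisms
    (hIso : ∀ ⦃a b : C⦄, (a ≅ b) → a ∈ X → b ∈ X)
    -- `X` is closed under finite direct sums
    (hSum : ∀ (a b : C), a ∈ X → b ∈ X → (a ⊞ b) ∈ X)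
    -- `X` is closed under direct summands
    (hSummand : ∀ (a b : C), b ∈ X → ∀ (s : a ⟶ b) (r : b ⟶ a), s ≫ r = 𝟙 a → a ∈ X)
    -- every object of `C` admits an `X`-cover
    (hCovering : ∀ c : C, ∃ (x : C) (ξ : x ⟶ c), x ∈ X ∧
      (∀ (x' : C), x' ∈ X → ∀ f : x' ⟶ c, ∃ g : x' ⟶ x, g ≫ ξ = f) ∧
      (∀ g : x ⟶ x, g ≫ ξ = ξ → IsIso g))
    -- `X` is left closed under extensions
    (hExt : ∀ (x' x'' : C), x' ∈ X → x'' ∈ X → ∀ (δ : x'' ⟶ x'⟦(1 : ℤ)⟧),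
      ∃ (e : C) (f : x' ⟶ e) (g : e ⟶ x''),
        e ∈ X ∧ Triangle.mk f g δ ∈ distTriang C) :
    ∀ c : C, ∃ (x y : C) (ξ : x ⟶ c) (γ : c ⟶ y) (φ : y ⟶ x⟦(1 : ℤ)⟧),
      x ∈ X ∧ (Triangle.mk ξ γ φ ∈ distTriang C) ∧
      ∀ (x' : C), x' ∈ X → ∀ f : x' ⟶ y, f = 0 := by
  intro c
  obtain ⟨x, ξ, hxX, hfac, hcover⟩ := hCovering c
  obtain ⟨y, γ, φ, hT⟩ := Pretriangulated.distinguished_cocone_triangle ξ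
  refine ⟨x, y, ξ, γ, φ, hxX, hT, ?_⟩
  intro x' hx' f
  -- first show `f ≫ φ = 0`
  have hδ : f ≫ φ = 0 := by
    obtain ⟨e, a, b, heX, hT'⟩ := hExt x x' hxX hx' (f ≫ φ)
    -- complete to a morphism of triangles with `𝟙 x` and `f`
    obtain ⟨h, hh₁, hh₂⟩ := Pretriangulated.complete_distinguished_triangle_morphism₂
      (Triangle.mk a b (f ≫ φ)) (Triangle.mk ξ γ φ) hT' hT (𝟙 x) f
      (by simp; change (f ≫ φ) ≫ (shiftFunctor C (1 : ℤ)).map (𝟙 x) = f ≫ φ; rw [CategoryTheory.Functor.map_id, Category.comp_id])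
    change a ≫ h = 𝟙 x ≫ ξ at hh₁
    rw [Category.id_comp] at hh₁
    -- factor `h : e ⟶ c` through the cover `ξ`
    obtain ⟨g, hg⟩ := hfac e heX h
    have hiso : IsIso (a ≫ g) := hcover (a ≫ g) (by rw [Category.assoc]; exact (by rw [hg]; exact hh₁ : a ≫ (g ≫ ξ) = ξ))
    -- therefore `a` is a split mono, so the connecting map `f ≫ φ` vanishes
    have hzero : (f ≫ φ) ≫ a⟦(1 : ℤ)⟧' = 0 :=
      Pretriangulated.comp_distTriang_mor_zero₃₁ _ hT'
    have : (f ≫ φ) ≫ a⟦(1 : ℤ)⟧' ≫ (g ≫ inv (a ≫ g))⟦(1 : ℤ)⟧' = f ≫ φ := by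
      rw [← Functor.map_comp, ← Category.assoc a g, IsIso.hom_inv_id,
        CategoryTheory.Functor.map_id, Category.comp_id]
    rw [← this, ← Category.assoc, hzero, zero_comp]
  -- now `f` factors through `γ`, hence through `ξ ≫ γ = 0`
  obtain ⟨v, hv⟩ := Pretriangulated.Triangle.coyoneda_exact₃ _ hT f hδ
  obtain ⟨w, hw⟩ := hfac x' hx' v
  have hξγ : ξ ≫ γ = 0 := Pretriangulated.comp_distTriang_mor_zero₁₂ _ hT
  change f = v ≫ γ at hv
  rw [hv, ← hw]; exact (Category.assoc w ξ γ).trans (by rw [hξγ, comp_zero])
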